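/- arXiv:2411.08863 — 4 statements merged into one kernel-verified Lean document; each statement's English description precedes it below -/
import Mathlib

section
/- For every complex number s with Re(s) > 1, 2∫₀^∞ x^{s-1} · 2πx²(2πx²−3)e^{-πx²} dx = s(s−1) π^{-s/2} Γ(s/2). -/
open Real Set

private lemma rp2 (t : ℝ) : t ^ (2:ℝ) = t ^ 2 := by
  rw [show (2:ℝ) = ((2:ℕ):ℝ) by norm_num, Real.rpow_natCast]

open MeasureTheory Complex in
private lemma mc_aux (w : ℂ) (hw : 0 < w.re) :
    MellinConvergent (fun t : ℝ => Complex.exp (-(π * t ^ 2))) w := by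
  have h1 : MellinConvergent (fun t : ℝ => Complex.exp (-t)) (w / 2) := by
    have := Complex.GammaIntegral_convergent (s := w / 2) (by
      rw [Complex.div_re]; simp [Complex.normSq]; positivity)
    refine this.congr_fun (fun t ht => ?_) measurableSet_Ioi
    simp [smul_eq_mul, mul_comm]
  have h2 : MellinConvergent (fun t : ℝ => Complex.exp (-(π * t))) (w / 2) := by
    have := (MellinConvergent.comp_mul_left (f := fun t : ℝ => Complex.exp (-t))
      (s := w / 2) (a := π) pi_pos).mpr h1
    refine this.congr_fun (fun t ht => ?_) measurableSet_Ioi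
    push_cast; ring_nf
  have h3 := (MellinConvergent.comp_rpow (f := fun t : ℝ => Complex.exp (-(π * t)))
      (s := w) (a := (2:ℝ)) two_ne_zero).mpr h2
  refine h3.congr_fun (fun t ht => ?_) measurableSet_Ioi
  simp only [rp2]
  push_cast
  ring_nf

open MeasureTheory Complex in
private lemma key_int (w : ℂ) (hw : 0 < w.re) :
    ∫ x in Ioi (0:ℝ), (x:ℂ) ^ (w - 1) * Complex.exp (-(π * x ^ 2)) =
      (π:ℂ) ^ (-w / 2) * Complex.Gamma (w / 2) / 2 := by
  have hw2 : 0 < (w / 2).re := by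
    rw [Complex.div_re]; simp [Complex.normSq]; positivity
  have h0 : (∫ x in Ioi (0:ℝ), (x:ℂ) ^ (w - 1) * Complex.exp (-(π * x ^ 2))) =
      mellin (fun t : ℝ => Complex.exp (-(π * t ^ 2))) w := by
    simp [mellin, smul_eq_mul]
  rw [h0]
  have hm := mellin_comp_rpow (fun u : ℝ => Complex.exp (-(π * u))) w (2:ℝ)
  simp only [rp2] at hm
  push_cast at hm
  have h2 : mellin (fun u : ℝ => Complex.exp (-(π * u))) (w / 2) =
      (1 / (π:ℂ)) ^ (w / 2) * Complex.Gamma (w / 2) := by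
    rw [mellin, ← integral_cpow_mul_exp_neg_mul_Ioi hw2 pi_pos]
    refine MeasureTheory.setIntegral_congr_fun measurableSet_Ioi fun t ht => ?_
    simp only [smul_eq_mul]
  have h3 : (1 / (π:ℂ)) ^ (w / 2) = (π:ℂ) ^ (-w / 2) := by
    rw [one_div, inv_cpow _ _ (by
        rw [Complex.arg_ofReal_of_nonneg pi_pos.le]; exact Real.pi_ne_zero.symm),
      ← Complex.cpow_neg, neg_div]
  rw [hm, h2, h3]
  rw [show |(2:ℝ)| = 2 by norm_num, Complex.real_smul]
  push_cast
  ring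

theorem stmt_2 (s : ℂ) (hs : 1 < s.re) :
    2 * ∫ x in Ioi (0:ℝ),
        (x:ℂ) ^ (s - 1) *
          (2 * π * x ^ 2 * (2 * π * x ^ 2 - 3) * Complex.exp (-(π * x ^ 2))) =
      s * (s - 1) * (π:ℂ) ^ (-s / 2) * Complex.Gamma (s / 2) := by
  have hπ : (π:ℂ) ≠ 0 := by exact_mod_cast pi_ne_zero
  have h4re : 0 < (s + 4).re := by simp [Complex.add_re]; linarith
  have h2re : 0 < (s + 2).re := by simp [Complex.add_re]; linarith
  have i4 : MeasureTheory.IntegrableOn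
      (fun x : ℝ => (x:ℂ) ^ (s + 4 - 1) * Complex.exp (-(π * x ^ 2))) (Ioi 0) := by
    have := mc_aux (s + 4) h4re
    simpa [MellinConvergent, smul_eq_mul] using this
  have i2 : MeasureTheory.IntegrableOn
      (fun x : ℝ => (x:ℂ) ^ (s + 2 - 1) * Complex.exp (-(π * x ^ 2))) (Ioi 0) := by
    have := mc_aux (s + 2) h2re
    simpa [MellinConvergent, smul_eq_mul] using this
  have hsplit : (∫ x in Ioi (0:ℝ), (x:ℂ) ^ (s - 1) *
        (2 * π * x ^ 2 * (2 * π * x ^ 2 - 3) * Complex.exp (-(π * x ^ 2)))) =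
      ∫ x in Ioi (0:ℝ),
        (4 * π ^ 2 * ((x:ℂ) ^ (s + 4 - 1) * Complex.exp (-(π * x ^ 2))) -
         6 * π * ((x:ℂ) ^ (s + 2 - 1) * Complex.exp (-(π * x ^ 2)))) := by
    refine MeasureTheory.setIntegral_congr_fun measurableSet_Ioi (fun x hx => ?_)
    have hx0 : (x:ℂ) ≠ 0 := by
      exact_mod_cast ne_of_gt (mem_Ioi.mp hx)
    have e4 : (x:ℂ) ^ (s + 4 - 1) = (x:ℂ) ^ (s - 1) * x ^ 4 := by
      rw [show s + 4 - 1 = (s - 1) + (4:ℕ) by push_cast; ring,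
        Complex.cpow_add _ _ hx0, Complex.cpow_natCast]
    have e2 : (x:ℂ) ^ (s + 2 - 1) = (x:ℂ) ^ (s - 1) * x ^ 2 := by
      rw [show s + 2 - 1 = (s - 1) + (2:ℕ) by push_cast; ring,
        Complex.cpow_add _ _ hx0, Complex.cpow_natCast]
    rw [e4, e2]; ring
  rw [hsplit, MeasureTheory.integral_sub (i4.const_mul _) (i2.const_mul _),
    MeasureTheory.integral_const_mul, MeasureTheory.integral_const_mul,
    key_int _ h4re, key_int _ h2re]
  have hs0 : s / 2 ≠ 0 := by
    intro h
    have : s = 0 := by field_simp at h; simpa using h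
    rw [this] at hs; norm_num at hs
  have hs1 : s / 2 + 1 ≠ 0 := by
    intro h
    have : (s / 2 + 1).re = 0 := by rw [h]; simp
    simp [Complex.add_re, Complex.div_re, Complex.normSq] at this
    nlinarith
  have g2 : Complex.Gamma ((s + 4) / 2) = (s / 2 + 1) * (s / 2) * Complex.Gamma (s / 2) := by
    rw [show (s + 4) / 2 = (s / 2 + 1) + 1 by ring, Complex.Gamma_add_one _ hs1,
      Complex.Gamma_add_one _ hs0]; ring
  have g1 : Complex.Gamma ((s + 2) / 2) = (s / 2) * Complex.Gamma (s / 2) := by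
    rw [show (s + 2) / 2 = s / 2 + 1 by ring, Complex.Gamma_add_one _ hs0]
  have p4 : (π:ℂ) ^ (-(s + 4) / 2) * (π:ℂ) ^ 2 = (π:ℂ) ^ (-s / 2) := by
    rw [show (-s / 2 : ℂ) = -(s + 4) / 2 + ((2:ℕ):ℂ) by push_cast; ring,
      Complex.cpow_add _ _ hπ, Complex.cpow_natCast]
  have p2 : (π:ℂ) ^ (-(s + 2) / 2) * (π:ℂ) = (π:ℂ) ^ (-s / 2) := by
    rw [show (-s / 2 : ℂ) = -(s + 2) / 2 + 1 by ring,
      Complex.cpow_add _ _ hπ, Complex.cpow_one]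
  rw [g2, g1]
  linear_combination (4 * (s / 2 + 1) * (s / 2) * Complex.Gamma (s / 2)) * p4 -
    (6 * (s / 2) * Complex.Gamma (s / 2)) * p2
end

section
/- The function f_∞(x) = 2πx²(2πx² − 3)e^{-πx²} on ℝ is equal to its own Fourier transform, where the Fourier transform is defined by f̂(ξ) = ∫_ℝ f(x) e^{-2πi x ξ} dx. -/
open Real

noncomputable def fInfR : ℝ → ℂ :=
  fun x => (2 * π * x ^ 2 * (2 * π * x ^ 2 - 3) * Real.exp (-(π * x ^ 2)) : ℝ)

namespace Stmt6Aux

open MeasureTheory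
open scoped FourierTransform

noncomputable def PG (c0 c1 c2 c3 c4 : ℂ) : ℝ → ℂ := fun t =>
  (c0 + c1 * t + c2 * (t:ℂ) ^ 2 + c3 * (t:ℂ) ^ 3 + c4 * (t:ℂ) ^ 4) *
    Complex.exp (-((π : ℂ) * (t:ℂ) ^ 2))

lemma hasDerivAt_PG (c0 c1 c2 c3 : ℂ) (x : ℝ) :
    HasDerivAt (PG c0 c1 c2 c3 0)
      (PG c1 (2*c2 - 2*π*c0) (3*c3 - 2*π*c1) (-(2*π*c2)) (-(2*π*c3)) x) x := by
  have hz : HasDerivAt (fun z : ℂ => z) 1 (x:ℂ) := hasDerivAt_id _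
  have hp : HasDerivAt (fun z : ℂ => c0 + c1 * z + c2 * z ^ 2 + c3 * z ^ 3 + (0:ℂ) * z ^ 4)
      (c1 + 2*c2*x + 3*c3*(x:ℂ)^2 + 0*(x:ℂ)^3) (x:ℂ) := by
    have := ((((hasDerivAt_const (x:ℂ) c0).add (hz.const_mul c1)).add
      ((hz.pow 2).const_mul c2)).add ((hz.pow 3).const_mul c3)).add
      ((hz.pow 4).const_mul (0:ℂ))
    refine this.congr_deriv ?_
    push_cast; ring
  have hin : HasDerivAt (fun z : ℂ => -((π:ℂ) * z^2)) (-((π:ℂ) * (2*x))) (x:ℂ) := by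
    have := ((hz.pow 2).const_mul (π:ℂ)).neg
    refine this.congr_deriv ?_
    push_cast; ring
  have hF := (hp.mul hin.cexp).comp_ofReal
  have : HasDerivAt (PG c0 c1 c2 c3 0)
      ((c1 + 2*c2*x + 3*c3*(x:ℂ)^2 + 0*(x:ℂ)^3) * Complex.exp (-((π:ℂ)*(x:ℂ)^2))
        + (c0 + c1*x + c2*(x:ℂ)^2 + c3*(x:ℂ)^3 + 0*(x:ℂ)^4) *
          (Complex.exp (-((π:ℂ)*(x:ℂ)^2)) * -((π:ℂ) * (2*x)))) x := hF
  convert this using 1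
  simp only [PG]
  ring

lemma deriv_PG (c0 c1 c2 c3 : ℂ) :
    deriv (PG c0 c1 c2 c3 0) =
      PG c1 (2*c2 - 2*π*c0) (3*c3 - 2*π*c1) (-(2*π*c2)) (-(2*π*c3)) :=
  funext fun x => (hasDerivAt_PG c0 c1 c2 c3 x).deriv

lemma PG_congr {c0 c1 c2 c3 c4 d0 d1 d2 d3 d4 : ℂ} (h0 : c0 = d0) (h1 : c1 = d1)
    (h2 : c2 = d2) (h3 : c3 = d3) (h4 : c4 = d4) :
    PG c0 c1 c2 c3 c4 = PG d0 d1 d2 d3 d4 := by rw [h0, h1, h2, h3, h4]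

lemma e1 : deriv (PG 1 0 0 0 0) = PG 0 (-(2*π)) 0 0 0 := by
  rw [deriv_PG]; exact PG_congr (by ring) (by ring) (by ring) (by ring) (by ring)

lemma e2 : deriv (PG 0 (-(2*π)) 0 0 0) = PG (-(2*π)) 0 (4*π^2) 0 0 := by
  rw [deriv_PG]; exact PG_congr (by ring) (by ring) (by ring) (by ring) (by ring)

lemma e3 : deriv (PG (-(2*π)) 0 (4*π^2) 0 0) = PG 0 (12*π^2) 0 (-(8*π^3)) 0 := by
  rw [deriv_PG]; exact PG_congr (by ring) (by ring) (by ring) (by ring) (by ring)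

lemma e4 : deriv (PG 0 (12*π^2) 0 (-(8*π^3)) 0) = PG (12*π^2) 0 (-(48*π^3)) 0 (16*π^4) := by
  rw [deriv_PG]; exact PG_congr (by ring) (by ring) (by ring) (by ring) (by ring)

lemma iteratedDeriv_two :
    iteratedDeriv 2 (PG 1 0 0 0 0) = PG (-(2*π)) 0 (4*π^2) 0 0 := by
  rw [iteratedDeriv_succ, iteratedDeriv_one, e1, e2]

lemma iteratedDeriv_four :
    iteratedDeriv 4 (PG 1 0 0 0 0) = PG (12*π^2) 0 (-(48*π^3)) 0 (16*π^4) := by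
  rw [iteratedDeriv_succ, iteratedDeriv_succ, iteratedDeriv_two, e3, e4]

lemma integrable_real (n : ℕ) (hn : n ≤ 4) :
    Integrable (fun x : ℝ => x ^ n * Real.exp (-(π * x ^ 2))) := by
  have h2 : (0:ℝ) < π - 2 := by nlinarith [pi_gt_three]
  apply Integrable.mono' (integrable_exp_neg_mul_sq h2)
  · apply Measurable.aestronglyMeasurable
    fun_prop
  · filter_upwards with x
    have hb : |x| ^ n ≤ Real.exp (2 * x ^ 2) := by
      have h1 : 1 + x ^ 2 ≤ Real.exp (x ^ 2) := by
        have := Real.add_one_le_exp (x ^ 2); linarith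
      have h1' : (0:ℝ) ≤ 1 + x ^ 2 := by positivity
      have hsq : (1 + x ^ 2) ^ 2 ≤ Real.exp (2 * x ^ 2) := by
        calc (1 + x ^ 2) ^ 2 ≤ Real.exp (x ^ 2) ^ 2 := by gcongr
        _ = Real.exp (2 * x ^ 2) := by rw [← Real.exp_nat_mul]; norm_num
      refine le_trans ?_ hsq
      have ha : (0:ℝ) ≤ |x| := abs_nonneg x
      have hx2 : |x| ^ 2 = x ^ 2 := sq_abs x
      rw [← hx2]
      interval_cases n <;>
        nlinarith [sq_nonneg (|x| - 1), sq_nonneg (|x| ^ 2 - |x|), sq_nonneg (|x| ^ 2 - 1),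
          sq_nonneg |x|]
    calc ‖x ^ n * Real.exp (-(π * x ^ 2))‖ = |x| ^ n * Real.exp (-(π * x ^ 2)) := by
          rw [norm_mul, norm_pow, Real.norm_eq_abs, Real.norm_eq_abs,
            abs_of_pos (Real.exp_pos _)]
    _ ≤ Real.exp (2 * x ^ 2) * Real.exp (-(π * x ^ 2)) := by
          gcongr
    _ = Real.exp (-(π - 2) * x ^ 2) := by rw [← Real.exp_add]; ring_nf

lemma integrable_pow_G (n : ℕ) (hn : n ≤ 4) :
    Integrable (fun x : ℝ => x ^ n • PG 1 0 0 0 0 x) := by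
  apply (integrable_real n hn).ofReal.congr
  filter_upwards with x
  show ((x ^ n * rexp (-(π * x ^ 2)) : ℝ) : ℂ) = x ^ n • PG 1 0 0 0 0 x
  simp only [PG, Complex.real_smul]
  push_cast [Complex.ofReal_exp]
  ring_nf

lemma fourier_G : 𝓕 (PG 1 0 0 0 0) = PG 1 0 0 0 0 := by
  have h := fourier_gaussian_pi (b := 1) (by norm_num)
  have e : (fun (x:ℝ) => Complex.exp (-(π:ℂ) * 1 * (x:ℂ)^2)) = PG 1 0 0 0 0 := by
    funext x
    simp only [PG]
    norm_num
  rw [e] at h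
  rw [h]
  funext t
  simp only [PG]
  norm_num

lemma char_cont (w : ℝ) : Continuous fun v : ℝ => ((𝐞 (-(v * w)) : Circle) : ℂ) := by
  fun_prop

lemma integrable_char_mul {p : ℝ → ℂ} (hp : Integrable p) (w : ℝ) :
    Integrable (fun v : ℝ => ((𝐞 (-(v * w)) : Circle) : ℂ) * p v) := by
  apply hp.bdd_mul (char_cont w).aestronglyMeasurable
  exact Filter.Eventually.of_forall fun x => le_of_eq (by exact Circle.norm_coe _)

lemma FI_const_mul (c : ℂ) (h : ℝ → ℂ) (w : ℝ) :
    𝓕 (fun x => c * h x) w = c * 𝓕 h w := by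
  rw [Real.fourier_real_eq, Real.fourier_real_eq,
    show c * ∫ (v : ℝ), 𝐞 (-(v * w)) • h v = ∫ (v : ℝ), c • (𝐞 (-(v * w)) • h v) from
      (integral_smul c _).symm]
  congr 1
  funext v
  rw [Circle.smul_def, Circle.smul_def, smul_eq_mul, smul_eq_mul, smul_eq_mul]
  ring

lemma FI_add {p q : ℝ → ℂ} (hp : Integrable p) (hq : Integrable q) (w : ℝ) :
    𝓕 (fun x => p x + q x) w = 𝓕 p w + 𝓕 q w := by
  have h1 : Integrable fun v : ℝ => 𝐞 (-(v * w)) • p v := by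
    simpa only [Circle.smul_def, smul_eq_mul] using integrable_char_mul hp w
  have h2 : Integrable fun v : ℝ => 𝐞 (-(v * w)) • q v := by
    simpa only [Circle.smul_def, smul_eq_mul] using integrable_char_mul hq w
  have e : (fun v : ℝ => 𝐞 (-(v * w)) • (p v + q v))
      = fun v => 𝐞 (-(v * w)) • p v + 𝐞 (-(v * w)) • q v := by
    funext v; rw [smul_add]
  rw [Real.fourier_real_eq, Real.fourier_real_eq,
    Real.fourier_real_eq, e, integral_add h1 h2]

lemma hInt : ∀ (n : ℕ), (n : ℕ∞) ≤ (4 : ℕ∞) →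
    Integrable (fun x : ℝ => x ^ n • PG 1 0 0 0 0 x) :=
  fun n hn => integrable_pow_G n (by exact_mod_cast hn)

lemma A4fun : 𝓕 (fun x : ℝ => (-(2*(π:ℂ)*Complex.I))^4 * ((x:ℂ)^4 * PG 1 0 0 0 0 x) : ℝ → ℂ)
    = PG (12*π^2) 0 (-(48*π^3)) 0 (16*π^4) := by
  have k := Real.iteratedDeriv_fourier (f := PG 1 0 0 0 0) (N := 4) (n := 4)
    hInt (le_refl _)
  rw [fourier_G, iteratedDeriv_four] at k
  have e : (fun x : ℝ => (-2*(π:ℂ)*Complex.I*(x:ℂ))^4 • PG 1 0 0 0 0 x)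
      = fun x : ℝ => (-(2*(π:ℂ)*Complex.I))^4 * ((x:ℂ)^4 * PG 1 0 0 0 0 x) := by
    funext x; rw [smul_eq_mul]; ring
  rw [← e]
  exact k.symm

lemma A2fun : 𝓕 (fun x : ℝ => (-(2*(π:ℂ)*Complex.I))^2 * ((x:ℂ)^2 * PG 1 0 0 0 0 x) : ℝ → ℂ)
    = PG (-(2*π)) 0 (4*π^2) 0 0 := by
  have k := Real.iteratedDeriv_fourier (f := PG 1 0 0 0 0) (N := 4) (n := 2)
    hInt (by norm_num)
  rw [fourier_G, iteratedDeriv_two] at k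
  have e : (fun x : ℝ => (-2*(π:ℂ)*Complex.I*(x:ℂ))^2 • PG 1 0 0 0 0 x)
      = fun x : ℝ => (-(2*(π:ℂ)*Complex.I))^2 * ((x:ℂ)^2 * PG 1 0 0 0 0 x) := by
    funext x; rw [smul_eq_mul]; ring
  rw [← e]
  exact k.symm

lemma int4 : Integrable (fun x : ℝ => (x:ℂ)^4 * PG 1 0 0 0 0 x) := by
  have := integrable_pow_G 4 (by norm_num)
  apply this.congr
  filter_upwards with x
  rw [Complex.real_smul, Complex.ofReal_pow]

lemma int2 : Integrable (fun x : ℝ => (x:ℂ)^2 * PG 1 0 0 0 0 x) := by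
  have := integrable_pow_G 2 (by norm_num)
  apply this.congr
  filter_upwards with x
  rw [Complex.real_smul, Complex.ofReal_pow]

end Stmt6Aux

open Stmt6Aux MeasureTheory in
open scoped FourierTransform in
theorem stmt_6 (ξ : ℝ) :
    (∫ x : ℝ, fInfR x * Complex.exp (-(2 * π * Complex.I * x * ξ))) = fInfR ξ := by
  have hL : (∫ x : ℝ, fInfR x * Complex.exp (-(2 * π * Complex.I * x * ξ)))
      = 𝓕 fInfR ξ := by
    rw [Real.fourier_real_eq_integral_exp_smul]
    congr 1
    funext x
    rw [smul_eq_mul, mul_comm]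
    congr 1
    push_cast
    ring
  have hdecomp : fInfR = fun x : ℝ => (4*(π:ℂ)^2) * ((x:ℂ)^4 * PG 1 0 0 0 0 x)
      + (-(6*(π:ℂ))) * ((x:ℂ)^2 * PG 1 0 0 0 0 x) := by
    funext x
    simp only [fInfR, PG]
    push_cast [Complex.ofReal_exp]
    ring_nf
  rw [hL, hdecomp]
  rw [FI_add ((int4).const_mul _) ((int2).const_mul _), FI_const_mul, FI_const_mul]
  have A4' := ((FI_const_mul ((-(2*(π:ℂ)*Complex.I))^4)
    (fun x : ℝ => (x:ℂ)^4 * PG 1 0 0 0 0 x) ξ).symm.trans (congrFun A4fun ξ))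
  have A2' := ((FI_const_mul ((-(2*(π:ℂ)*Complex.I))^2)
    (fun x : ℝ => (x:ℂ)^2 * PG 1 0 0 0 0 x) ξ).symm.trans (congrFun A2fun ξ))
  have hI4 : Complex.I ^ 4 = 1 := by
    rw [show (4:ℕ) = 2*2 from rfl, pow_mul, Complex.I_sq]; norm_num
  have c4 : (-(2*(π:ℂ)*Complex.I))^4 = 16*(π:ℂ)^4 := by
    rw [show (-(2*(π:ℂ)*Complex.I))^4 = (2*(π:ℂ))^4 * Complex.I^4 by ring, hI4]; ring
  have c2 : (-(2*(π:ℂ)*Complex.I))^2 = -(4*(π:ℂ)^2) := by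
    rw [show (-(2*(π:ℂ)*Complex.I))^2 = (2*(π:ℂ))^2 * Complex.I^2 by ring, Complex.I_sq]; ring
  rw [c4] at A4'
  rw [c2] at A2'
  have hπ : (π:ℂ) ≠ 0 := by
    exact_mod_cast Real.pi_ne_zero
  apply mul_left_cancel₀ (a := 64*(π:ℂ)^6)
    (by simp [hπ, pow_ne_zero])
  simp only [PG] at A4' A2' ⊢
  linear_combination (16*(π:ℂ)^4) * A4' + (96*(π:ℂ)^5) * A2'
end

section
/- Let f(x) = 2πx²(2πx² − 3)e^{-πx²}. For every nonzero real y, the sum ∑_{n ∈ ℤ, n ≠ 0} f(yn) is nonnegative. -/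
open Real MeasureTheory Filter Asymptotics
open scoped FourierTransform Topology

noncomputable def pg (a b c d e : ℂ) : ℝ → ℂ := fun x =>
  (a * (x:ℂ)^4 + b * (x:ℂ)^3 + c * (x:ℂ)^2 + d * (x:ℂ) + e) * Complex.exp (-(π:ℂ) * (x:ℂ)^2)

lemma hasDerivAt_pg (a b c d e : ℂ) (x : ℝ) :
    HasDerivAt (pg a b c d e)
      ((4*a*(x:ℂ)^3 + 3*b*(x:ℂ)^2 + 2*c*(x:ℂ) + d
        - (a*(x:ℂ)^4 + b*(x:ℂ)^3 + c*(x:ℂ)^2 + d*(x:ℂ) + e) * (2*(π:ℂ)*(x:ℂ)))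
        * Complex.exp (-(π:ℂ) * (x:ℂ)^2)) x := by
  have hx : HasDerivAt (fun t:ℝ => (t:ℂ)) 1 x := by
    simpa using (hasDerivAt_id x).ofReal_comp
  have hx2 := hx.mul hx
  have hx3 := hx2.mul hx
  have hx4 := hx3.mul hx
  have h4 := hx4.const_mul a
  have h3 := hx3.const_mul b
  have h2 := hx2.const_mul c
  have h1 := hx.const_mul d
  have h0 : HasDerivAt (fun _:ℝ => e) 0 x := hasDerivAt_const x e
  have hp : HasDerivAt (fun t:ℝ => a*(t:ℂ)^4 + b*(t:ℂ)^3 + c*(t:ℂ)^2 + d*(t:ℂ) + e)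
      (4*a*(x:ℂ)^3 + 3*b*(x:ℂ)^2 + 2*c*(x:ℂ) + d) x := by
    have h := (((h4.add h3).add h2).add h1).add h0
    convert h using 1
    · rfl
    · funext t; simp only [Pi.mul_apply, Pi.add_apply]; push_cast; ring
    · simp only [Pi.mul_apply]; push_cast; ring
  have h2' : HasDerivAt (fun t:ℝ => -(π:ℂ)*(t:ℂ)^2) (-(π:ℂ)*(2*(x:ℂ))) x := by
    have h := hx2.const_mul (-(π:ℂ))
    convert h using 1
    · rfl
    · funext t; simp only [Pi.mul_apply]; push_cast; ring
    · push_cast; ring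
  have hG := h2'.cexp
  have := hp.mul hG
  unfold pg
  convert this using 1
  · rfl
  · rfl
  · ring

lemma deriv_pg (b c d e : ℂ) :
    deriv (pg 0 b c d e)
      = pg (-2*(π:ℂ)*b) (-2*(π:ℂ)*c) (3*b - 2*(π:ℂ)*d) (2*c - 2*(π:ℂ)*e) d := by
  funext x
  refine (hasDerivAt_pg 0 b c d e x).deriv.trans ?_
  unfold pg; ring

lemma differentiable_pg (a b c d e : ℂ) : Differentiable ℝ (pg a b c d e) :=
  fun x => (hasDerivAt_pg a b c d e x).differentiableAt

lemma continuous_pg (a b c d e : ℂ) : Continuous (pg a b c d e) := by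
  unfold pg; fun_prop

lemma norm_pg_term (k : ℕ) (x : ℝ) :
    ‖(x:ℂ)^k * Complex.exp (-(π:ℂ) * (x:ℂ)^2)‖ = |x|^k * rexp (-π*x^2) := by
  have he : Complex.exp (-(π:ℂ) * (x:ℂ)^2) = ((rexp (-π*x^2) : ℝ) : ℂ) := by
    rw [Complex.ofReal_exp]; congr 1; push_cast; ring
  rw [norm_mul, norm_pow, he]
  have : ‖((rexp (-π*x^2) : ℝ) : ℂ)‖ = rexp (-π*x^2) := by
    rw [Complex.norm_real, Real.norm_eq_abs, abs_of_pos (Real.exp_pos _)]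
  rw [this, Complex.norm_real, Real.norm_eq_abs]

lemma integrable_term (k : ℕ) :
    Integrable (fun x:ℝ => (x:ℂ)^k * Complex.exp (-(π:ℂ) * (x:ℂ)^2)) := by
  have hcont : Continuous (fun x:ℝ => (x:ℂ)^k * Complex.exp (-(π:ℂ) * (x:ℂ)^2)) := by fun_prop
  have h1 : Integrable (fun x:ℝ => x^(2*k) * rexp (-π*x^2)) := by
    have h := integrable_rpow_mul_exp_neg_mul_sq (b := π) pi_pos
      (s := ((2*k : ℕ) : ℝ)) (lt_of_lt_of_le (by norm_num) (Nat.cast_nonneg (2*k)))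
    rw [show (fun x:ℝ => x ^ (((2*k:ℕ)):ℝ) * rexp (-π*x^2))
        = fun x:ℝ => x^(2*k) * rexp (-π*x^2) from
      funext fun x => by rw [Real.rpow_natCast]] at h
    exact h
  have h2 := integrable_exp_neg_mul_sq (b := π) pi_pos
  have hint : Integrable (fun x:ℝ => x^(2*k) * rexp (-π*x^2) + rexp (-π*x^2)) := h1.add h2
  apply hint.mono' hcont.aestronglyMeasurable
  filter_upwards with x
  rw [norm_pg_term]
  have t0 : (0:ℝ) ≤ |x|^k := by positivity
  have t1 : |x|^k ≤ x^(2*k) + 1 := by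
    have e1 : (|x|^k)^2 = (x^2)^k := by rw [← pow_mul, mul_comm k 2, pow_mul, sq_abs]
    have e2 : x^(2*k) = (x^2)^k := pow_mul x 2 k
    nlinarith
  have := Real.exp_pos (-π*x^2)
  nlinarith

lemma integrable_pg (a b c d e : ℂ) : Integrable (pg a b c d e) := by
  have h : pg a b c d e = fun x:ℝ =>
      a * ((x:ℂ)^4 * Complex.exp (-(π:ℂ) * (x:ℂ)^2))
      + (b * ((x:ℂ)^3 * Complex.exp (-(π:ℂ) * (x:ℂ)^2))
      + (c * ((x:ℂ)^2 * Complex.exp (-(π:ℂ) * (x:ℂ)^2))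
      + (d * ((x:ℂ)^1 * Complex.exp (-(π:ℂ) * (x:ℂ)^2))
      + e * ((x:ℂ)^0 * Complex.exp (-(π:ℂ) * (x:ℂ)^2))))) := by
    funext x; unfold pg; ring
  rw [h]
  exact ((integrable_term 4).const_mul a).add (((integrable_term 3).const_mul b).add
    (((integrable_term 2).const_mul c).add (((integrable_term 1).const_mul d).add
    ((integrable_term 0).const_mul e))))

lemma F_g0 : 𝓕 (pg 0 0 0 0 1) = pg 0 0 0 0 1 := by
  have h := fourier_gaussian_pi (b := 1) (by norm_num)
  have e1 : (fun x:ℝ => Complex.exp (-(π:ℂ) * 1 * (x:ℂ)^2)) = pg 0 0 0 0 1 := by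
    funext x; unfold pg; ring
  rw [e1] at h
  rw [h]
  funext t; unfold pg
  simp only [Complex.one_cpow, div_one, one_div, inv_one, one_mul]
  ring

lemma hd0 : deriv (pg 0 0 0 0 1) = pg 0 0 0 (-2*(π:ℂ)) 0 :=
  (deriv_pg _ _ _ _).trans (funext fun x => by unfold pg; ring)

lemma hd1 : deriv (pg 0 0 0 (-2*(π:ℂ)) 0) = pg 0 0 (4*(π:ℂ)^2) 0 (-2*(π:ℂ)) :=
  (deriv_pg _ _ _ _).trans (funext fun x => by unfold pg; ring)

lemma hd2 : deriv (pg 0 0 (4*(π:ℂ)^2) 0 (-2*(π:ℂ))) = pg 0 (-8*(π:ℂ)^3) 0 (12*(π:ℂ)^2) 0 :=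
  (deriv_pg _ _ _ _).trans (funext fun x => by unfold pg; ring)

lemma hd3 : deriv (pg 0 (-8*(π:ℂ)^3) 0 (12*(π:ℂ)^2) 0)
    = pg (16*(π:ℂ)^4) 0 (-48*(π:ℂ)^3) 0 (12*(π:ℂ)^2) :=
  (deriv_pg _ _ _ _).trans (funext fun x => by unfold pg; ring)

lemma F_step {p q : ℝ → ℂ} (hd : deriv p = q) (hi : Integrable p) (hdiff : Differentiable ℝ p)
    (hqi : Integrable q) : 𝓕 q = fun ξ : ℝ => (2*(π:ℂ)*Complex.I*(ξ:ℂ)) • 𝓕 p ξ := by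
  rw [← hd]
  exact Real.fourier_deriv hi hdiff (hd ▸ hqi)

lemma F_g1 : 𝓕 (pg 0 0 0 (-2*(π:ℂ)) 0)
    = fun ξ : ℝ => (2*(π:ℂ)*Complex.I*(ξ:ℂ)) * pg 0 0 0 0 1 ξ := by
  have h := F_step hd0 (integrable_pg _ _ _ _ _) (differentiable_pg _ _ _ _ _)
    (integrable_pg _ _ _ _ _)
  rw [h, F_g0]
  funext ξ; simp [smul_eq_mul]

lemma F_g2 : 𝓕 (pg 0 0 (4*(π:ℂ)^2) 0 (-2*(π:ℂ)))
    = fun ξ : ℝ => (2*(π:ℂ)*Complex.I*(ξ:ℂ))^2 * pg 0 0 0 0 1 ξ := by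
  have h := F_step hd1 (integrable_pg _ _ _ _ _) (differentiable_pg _ _ _ _ _)
    (integrable_pg _ _ _ _ _)
  rw [h, F_g1]
  funext ξ; simp [smul_eq_mul]; ring

lemma F_g3 : 𝓕 (pg 0 (-8*(π:ℂ)^3) 0 (12*(π:ℂ)^2) 0)
    = fun ξ : ℝ => (2*(π:ℂ)*Complex.I*(ξ:ℂ))^3 * pg 0 0 0 0 1 ξ := by
  have h := F_step hd2 (integrable_pg _ _ _ _ _) (differentiable_pg _ _ _ _ _)
    (integrable_pg _ _ _ _ _)
  rw [h, F_g2]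
  funext ξ; simp [smul_eq_mul]; ring

lemma F_g4 : 𝓕 (pg (16*(π:ℂ)^4) 0 (-48*(π:ℂ)^3) 0 (12*(π:ℂ)^2))
    = fun ξ : ℝ => (2*(π:ℂ)*Complex.I*(ξ:ℂ))^4 * pg 0 0 0 0 1 ξ := by
  have h := F_step hd3 (integrable_pg _ _ _ _ _) (differentiable_pg _ _ _ _ _)
    (integrable_pg _ _ _ _ _)
  rw [h, F_g3]
  funext ξ; simp [smul_eq_mul]; ring

lemma fourier_integrand_integrable {g : ℝ → ℂ} (hg : Integrable g) (hc : Continuous g) (w : ℝ) :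
    Integrable (fun v : ℝ => Complex.exp ((↑(-2*π*v*w))*Complex.I) • g v) := by
  simp only [smul_eq_mul]
  apply hg.bdd_mul
  · apply Continuous.aestronglyMeasurable
    fun_prop
  · exact Filter.Eventually.of_forall fun v => le_of_eq (Complex.norm_exp_ofReal_mul_I _)

lemma fourier_comb {gA gB : ℝ → ℂ} (hA : Integrable gA) (hcA : Continuous gA)
    (hB : Integrable gB) (hcB : Continuous gB) (c1 c2 : ℂ) :
    𝓕 (fun x => c1 * gA x + c2 * gB x)
      = fun w => c1 * 𝓕 gA w + c2 * 𝓕 gB w := by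
  funext w
  rw [Real.fourier_real_eq_integral_exp_smul,
    Real.fourier_real_eq_integral_exp_smul,
    Real.fourier_real_eq_integral_exp_smul]
  have h1 := fourier_integrand_integrable hA hcA w
  have h2 := fourier_integrand_integrable hB hcB w
  have e1 : (fun v:ℝ => Complex.exp ((↑(-2*π*v*w))*Complex.I) • (c1 * gA v + c2 * gB v))
      = fun v:ℝ => c1 * (Complex.exp ((↑(-2*π*v*w))*Complex.I) • gA v)
        + c2 * (Complex.exp ((↑(-2*π*v*w))*Complex.I) • gB v) := by
    funext v; simp only [smul_eq_mul]; ring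
  rw [e1, integral_add (h1.const_mul c1) (h2.const_mul c2), integral_const_mul,
    integral_const_mul]

lemma F_FF : 𝓕 (pg (4*(π:ℂ)^2) 0 (-6*(π:ℂ)) 0 0) = pg (4*(π:ℂ)^2) 0 (-6*(π:ℂ)) 0 0 := by
  have hπ : (π:ℂ) ≠ 0 := by exact_mod_cast Real.pi_ne_zero
  have hsplit : pg (4*(π:ℂ)^2) 0 (-6*(π:ℂ)) 0 0
      = fun x => (1/(4*(π:ℂ)^2)) * pg (16*(π:ℂ)^4) 0 (-48*(π:ℂ)^3) 0 (12*(π:ℂ)^2) x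
        + (3/(2*(π:ℂ))) * pg 0 0 (4*(π:ℂ)^2) 0 (-2*(π:ℂ)) x := by
    funext x; unfold pg; field_simp; ring
  rw [hsplit, fourier_comb (integrable_pg _ _ _ _ _) (continuous_pg _ _ _ _ _)
    (integrable_pg _ _ _ _ _) (continuous_pg _ _ _ _ _)]
  funext ξ
  rw [show (𝓕 (pg (16*(π:ℂ)^4) 0 (-48*(π:ℂ)^3) 0 (12*(π:ℂ)^2))) ξ
      = (2*(π:ℂ)*Complex.I*(ξ:ℂ))^4 * pg 0 0 0 0 1 ξ from congrFun F_g4 ξ,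
    show (𝓕 (pg 0 0 (4*(π:ℂ)^2) 0 (-2*(π:ℂ)))) ξ
      = (2*(π:ℂ)*Complex.I*(ξ:ℂ))^2 * pg 0 0 0 0 1 ξ from congrFun F_g2 ξ]
  unfold pg
  have hI2 : (Complex.I)^2 = -1 := Complex.I_sq
  have hI4 : (Complex.I)^4 = 1 := by
    rw [show (4:ℕ) = 2*2 from rfl, pow_mul, hI2]; norm_num
  field_simp
  ring_nf
  rw [show (Complex.I)^4 = 1 from hI4, show (Complex.I)^2 = -1 from hI2]
  ring

lemma eventually_ne_zero_cocompact : ∀ᶠ x : ℝ in cocompact ℝ, x ≠ 0 := by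
  have h : {(0:ℝ)}ᶜ ∈ cocompact ℝ :=
    mem_cocompact.2 ⟨{0}, isCompact_singleton, subset_rfl⟩
  filter_upwards [h] with x hx
  exact hx

lemma term_bigO (a : ℝ) (ha : 0 < a) (k : ℕ) :
    (fun x:ℝ => (x:ℂ)^k * Complex.exp (-(a:ℂ) * (x:ℂ)^2))
      =O[cocompact ℝ] (fun x => |x| ^ (-2:ℝ)) := by
  rw [← isBigO_norm_left]
  have hnorm : (fun x:ℝ => ‖(x:ℂ)^k * Complex.exp (-(a:ℂ) * (x:ℂ)^2)‖)
      = fun x => |x|^k * rexp (-a*x^2) := by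
    funext x
    have he : Complex.exp (-(a:ℂ) * (x:ℂ)^2) = ((rexp (-a*x^2) : ℝ) : ℂ) := by
      rw [Complex.ofReal_exp]; congr 1; push_cast; ring
    rw [norm_mul, norm_pow, he, Complex.norm_real, Real.norm_eq_abs,
      Complex.norm_real, Real.norm_eq_abs, abs_of_pos (Real.exp_pos _)]
  rw [hnorm]
  have h1 : Tendsto (fun x:ℝ => |x| ^ ((k:ℝ)+2) * rexp (-a * x^2)) (cocompact ℝ) (𝓝 0) :=
    tendsto_rpow_abs_mul_exp_neg_mul_sq_cocompact ha _
  have h2 : (fun x:ℝ => |x| ^ ((k:ℝ)+2) * rexp (-a * x^2)) =O[cocompact ℝ]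
      (fun _ => (1:ℝ)) := h1.isBigO_one ℝ
  have h3 := h2.mul (isBigO_refl (fun x:ℝ => |x| ^ (-2:ℝ)) (cocompact ℝ))
  have h4 : (fun x:ℝ => |x| ^ ((k:ℝ)+2) * rexp (-a * x^2) * |x| ^ (-2:ℝ))
      =O[cocompact ℝ] (fun x => |x| ^ (-2:ℝ)) := by
    refine h3.congr' EventuallyEq.rfl ?_
    filter_upwards with x
    simp
  refine h4.congr' ?_ EventuallyEq.rfl
  filter_upwards [eventually_ne_zero_cocompact] with x hx
  have hax : (0:ℝ) < |x| := abs_pos.2 hx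
  rw [mul_right_comm, ← Real.rpow_add hax]
  norm_num

lemma FF_scaled_bigO (z : ℝ) (hz : z ≠ 0) :
    (fun x:ℝ => pg (4*(π:ℂ)^2) 0 (-6*(π:ℂ)) 0 0 (z*x))
      =O[cocompact ℝ] (fun x => |x| ^ (-2:ℝ)) := by
  have ha : 0 < π * z^2 := by positivity
  have h4 := (term_bigO (π*z^2) ha 4).const_mul_left ((4*(π:ℂ)^2) * (z:ℂ)^4)
  have h2 := (term_bigO (π*z^2) ha 2).const_mul_left ((-6*(π:ℂ)) * (z:ℂ)^2)
  refine (h4.add h2).congr_left fun x => ?_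
  unfold pg
  have he : Complex.exp (-((π*z^2 : ℝ):ℂ) * (x:ℂ)^2)
      = Complex.exp (-(π:ℂ) * ((z*x : ℝ):ℂ)^2) := by
    congr 1; push_cast; ring
  rw [he]
  push_cast
  ring

lemma F_scaled (y : ℝ) (hy : y ≠ 0) :
    𝓕 (fun x : ℝ => pg (4*(π:ℂ)^2) 0 (-6*(π:ℂ)) 0 0 (y*x))
      = fun ξ : ℝ => (|y⁻¹| : ℝ) • pg (4*(π:ℂ)^2) 0 (-6*(π:ℂ)) 0 0 (y⁻¹*ξ) := by
  funext ξ
  rw [Real.fourier_real_eq_integral_exp_smul]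
  have e1 : (fun v:ℝ => Complex.exp ((↑(-2*π*v*ξ))*Complex.I)
        • pg (4*(π:ℂ)^2) 0 (-6*(π:ℂ)) 0 0 (y*v))
      = fun v:ℝ => (fun u:ℝ => Complex.exp ((↑(-2*π*u*(y⁻¹*ξ)))*Complex.I)
        • pg (4*(π:ℂ)^2) 0 (-6*(π:ℂ)) 0 0 u) (y*v) := by
    funext v
    simp only
    have harg : -2*π*(y*v)*(y⁻¹*ξ) = -2*π*v*ξ := by field_simp
    rw [harg]
  rw [e1, MeasureTheory.Measure.integral_comp_mul_left
    (fun u:ℝ => Complex.exp ((↑(-2*π*u*(y⁻¹*ξ)))*Complex.I)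
      • pg (4*(π:ℂ)^2) 0 (-6*(π:ℂ)) 0 0 u) y,
    ← Real.fourier_real_eq_integral_exp_smul, F_FF]

lemma poisson_pg (y : ℝ) (hy : y ≠ 0) :
    ∑' n:ℤ, pg (4*(π:ℂ)^2) 0 (-6*(π:ℂ)) 0 0 (y*n)
      = ∑' n:ℤ, (|y⁻¹| : ℝ) • pg (4*(π:ℂ)^2) 0 (-6*(π:ℂ)) 0 0 (y⁻¹*n) := by
  have hc : Continuous (fun x:ℝ => pg (4*(π:ℂ)^2) 0 (-6*(π:ℂ)) 0 0 (y*x)) :=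
    (continuous_pg _ _ _ _ _).comp (continuous_const.mul continuous_id)
  have hb := FF_scaled_bigO y hy
  have hFb : 𝓕 (fun x:ℝ => pg (4*(π:ℂ)^2) 0 (-6*(π:ℂ)) 0 0 (y*x))
      =O[cocompact ℝ] fun x => |x|^(-2:ℝ) := by
    rw [F_scaled y hy]
    exact (FF_scaled_bigO y⁻¹ (inv_ne_zero hy)).const_smul_left (|y⁻¹| : ℝ)
  have h := Real.tsum_eq_tsum_fourier_of_rpow_decay hc one_lt_two hb hFb 0
  simp only [zero_add] at h
  rw [h]
  refine tsum_congr fun n => ?_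
  rw [F_scaled y hy]
  simp only [QuotientAddGroup.mk_zero, fourier_eval_zero, mul_one]

noncomputable def fexpr : ℝ → ℝ :=
  fun x => 2 * π * x ^ 2 * (2 * π * x ^ 2 - 3) * Real.exp (-(π * x ^ 2))

lemma ofReal_fexpr (x : ℝ) :
    ((fexpr x : ℝ) : ℂ) = pg (4*(π:ℂ)^2) 0 (-6*(π:ℂ)) 0 0 x := by
  unfold fexpr pg
  push_cast
  rw [neg_mul]
  ring

lemma summable_fexpr (z : ℝ) (hz : z ≠ 0) : Summable (fun n:ℤ => fexpr (z*n)) := by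
  have hb := FF_scaled_bigO z hz
  have h1 := hb.norm_left
  have hb' : (fun x:ℝ => fexpr (z*x)) =O[cocompact ℝ] fun x => |x|^(-2:ℝ) := by
    refine isBigO_norm_left.mp (h1.congr_left fun x => ?_)
    rw [← ofReal_fexpr, Complex.norm_real]
  exact summable_of_isBigO (Real.summable_abs_int_rpow one_lt_two)
    (hb'.comp_tendsto Int.tendsto_coe_cofinite)

lemma key (y : ℝ) (hy : y ≠ 0) :
    ∑' n:ℤ, fexpr (y*n) = |y|⁻¹ * ∑' n:ℤ, fexpr (y⁻¹*n) := by
  have hp := poisson_pg y hy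
  have h1 : ∑' n:ℤ, pg (4*(π:ℂ)^2) 0 (-6*(π:ℂ)) 0 0 (y*n)
      = ((∑' n:ℤ, fexpr (y*n) : ℝ) : ℂ) := by
    rw [Complex.ofReal_tsum]
    exact tsum_congr fun n => (ofReal_fexpr _).symm
  have h2 : ∑' n:ℤ, (|y⁻¹| : ℝ) • pg (4*(π:ℂ)^2) 0 (-6*(π:ℂ)) 0 0 (y⁻¹*n)
      = ((|y|⁻¹ * ∑' n:ℤ, fexpr (y⁻¹*n) : ℝ) : ℂ) := by
    have e1 : ∀ n:ℤ, (|y⁻¹| : ℝ) • pg (4*(π:ℂ)^2) 0 (-6*(π:ℂ)) 0 0 (y⁻¹*n)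
        = ((|y|⁻¹ : ℝ) : ℂ) * ((fexpr (y⁻¹*n) : ℝ) : ℂ) := fun n => by
      rw [← ofReal_fexpr, Complex.real_smul, abs_inv]
    rw [tsum_congr e1, tsum_mul_left, Complex.ofReal_mul, Complex.ofReal_tsum]
  exact Complex.ofReal_injective (by rw [← h1, ← h2]; exact hp)

lemma fexpr_zero : fexpr 0 = 0 := by unfold fexpr; norm_num

lemma fexpr_nonneg {x : ℝ} (hx : 1 ≤ |x|) : 0 ≤ fexpr x := by
  have h2 : 1 ≤ x^2 := by nlinarith [sq_abs x, abs_nonneg x]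
  have h3 : 3 ≤ 2*π*x^2 := by nlinarith [pi_gt_three]
  have h0 : 0 ≤ 2*π*x^2 := by positivity
  unfold fexpr
  exact mul_nonneg (mul_nonneg h0 (by linarith)) (Real.exp_pos _).le

lemma tsum_zspaced_nonneg {z : ℝ} (hz : 1 ≤ |z|) : 0 ≤ ∑' n:ℤ, fexpr (z*n) := by
  apply tsum_nonneg
  intro n
  rcases eq_or_ne n 0 with rfl|hn
  · simp [fexpr_zero]
  · apply fexpr_nonneg
    have h1 : (1:ℝ) ≤ |(n:ℝ)| := by exact_mod_cast Int.one_le_abs hn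
    rw [abs_mul]
    nlinarith [abs_nonneg z]

lemma subtype_sum (z : ℝ) :
    ∑' n : {n:ℤ // n ≠ 0}, fexpr (z*(n:ℤ)) = ∑' n:ℤ, fexpr (z*n) := by
  have h := tsum_subtype_eq_of_support_subset
    (f := fun n:ℤ => fexpr (z*n)) (s := {n:ℤ | n ≠ 0}) ?_
  · exact h
  · intro n hn
    simp only [Function.mem_support] at hn
    simp only [Set.mem_setOf_eq]
    rintro rfl
    exact hn (by simp [fexpr_zero])

lemma main_nonneg (y : ℝ) (hy : y ≠ 0) :
    0 ≤ ∑' n : {n:ℤ // n ≠ 0}, fexpr (y*(n:ℤ)) := by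
  rw [subtype_sum]
  rcases le_or_gt 1 |y| with h|h
  · exact tsum_zspaced_nonneg h
  · have h0 : 0 < |y| := abs_pos.2 hy
    have h1 : 1 ≤ |y⁻¹| := by
      rw [abs_inv]
      have hinv : 0 < |y|⁻¹ := inv_pos.2 h0
      nlinarith [mul_inv_cancel₀ (ne_of_gt h0)]
    rw [key y hy]
    exact mul_nonneg (inv_nonneg.2 (abs_nonneg y)) (tsum_zspaced_nonneg h1)

theorem stmt_9 (f : ℝ → ℝ)
    (hf : ∀ x : ℝ, f x = 2 * π * x ^ 2 * (2 * π * x ^ 2 - 3) * Real.exp (-(π * x ^ 2)))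
    (y : ℝ) (hy : y ≠ 0) :
    0 ≤ ∑' n : {n : ℤ // n ≠ 0}, f (y * (n : ℤ)) := by
  have hfe : ∀ x, f x = fexpr x := fun x => (hf x).trans rfl
  simp only [hfe]
  exact main_nonneg y hy
end

section
/- For every s ∈ ℂ with Re(s) > 0, ∫_{ℂ∖{0}} |z|^{2s} e^{-2π|z|²} d×z = (2π)^{1-s} Γ(s), where d×z = 2 dA(z)/|z|² and dA is Lebesgue measure on ℝ² ≅ ℂ. -/
open Real MeasureTheory

theorem stmt_19 (s : ℂ) (hs : 0 < s.re) :
    (∫ z in {(0:ℂ)}ᶜ,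
        ((‖z‖ : ℝ) : ℂ) ^ (2 * s) *
          Complex.exp (-(2 * π * ‖z‖ ^ 2)) * (2 / (‖z‖ ^ 2))) =
      (2 * π : ℂ) ^ (1 - s) * Complex.Gamma s := by
  have hπ : (0:ℝ) < 2 * π := by positivity
  have hπc : ((2 * π : ℝ) : ℂ) ≠ 0 := by
    exact_mod_cast hπ.ne'
  set f : ℝ → ℂ := fun r => ((r : ℝ) : ℂ) ^ (2 * s) *
      Complex.exp (-(2 * π * (r:ℝ) ^ 2)) * (2 / ((r:ℝ) ^ 2 : ℝ)) with hf
  set g : ℝ → ℂ := fun t => (Real.exp (-t) : ℂ) * (t : ℂ) ^ (s - 1) with hg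
  -- Step 0: drop the removed point
  have h0 : (∫ z in {(0:ℂ)}ᶜ,
        ((‖z‖ : ℝ) : ℂ) ^ (2 * s) *
          Complex.exp (-(2 * π * ‖z‖ ^ 2)) * (2 / (‖z‖ ^ 2)))
      = ∫ z : ℂ, f ‖z‖ := by
    rw [restrict_compl_singleton]
    congr 1
    ext z
    simp only [hf]
    push_cast
    ring_nf
  rw [h0, integral_fun_norm_addHaar (volume : Measure ℂ) f]
  -- Step 1 : Gamma as an integral, scaled
  have hGam : ∫ u in Set.Ioi (0:ℝ), g (2 * π * u)
      = (2 * π : ℝ)⁻¹ • Complex.Gamma s := by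
    rw [integral_comp_mul_left_Ioi g 0 hπ, mul_zero,
      Complex.Gamma_eq_integral hs, Complex.GammaIntegral]
  -- Step 2 : substitution u = y ^ 2
  have hsub : ∫ y in Set.Ioi (0:ℝ), ((2:ℝ) * y ^ ((2:ℝ) - 1)) • g (2 * π * y ^ ((2:ℝ)))
      = ∫ u in Set.Ioi (0:ℝ), g (2 * π * u) :=
    integral_comp_rpow_Ioi_of_pos (g := fun u => g (2 * π * u)) two_pos
  -- Step 3 : pointwise identity on Ioi 0
  have hpt : ∀ y ∈ Set.Ioi (0:ℝ), y ^ (Module.finrank ℝ ℂ - 1) • f y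
      = ((2 * π : ℝ) : ℂ) ^ (1 - s) * (((2:ℝ) * y ^ ((2:ℝ) - 1)) • g (2 * π * y ^ ((2:ℝ)))) := by
    intro y hy
    have hy0 : (0:ℝ) < y := hy
    have hyc : ((y:ℝ):ℂ) ≠ 0 := by exact_mod_cast hy0.ne'
    have hrp : y ^ ((2:ℝ)) = y ^ (2:ℕ) := by
      rw [← Real.rpow_natCast y 2]; norm_num
    have hrp1 : y ^ ((2:ℝ) - 1) = y := by norm_num
    simp only [Complex.finrank_real_complex, hrp, hrp1, hg, hf, pow_one]
    have hcast : ((2 * π * y ^ (2:ℕ) : ℝ) : ℂ)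
        = ((2 * π : ℝ) : ℂ) * (((y * y : ℝ)) : ℂ) := by push_cast; ring
    have hmul : ((2 * π * y ^ (2:ℕ) : ℝ) : ℂ) ^ (s - 1)
        = ((2 * π : ℝ) : ℂ) ^ (s - 1) * (((y:ℝ):ℂ) ^ (s - 1) * ((y:ℝ):ℂ) ^ (s - 1)) := by
      rw [hcast, Complex.mul_cpow_ofReal_nonneg hπ.le (mul_nonneg hy0.le hy0.le)]
      congr 1
      push_cast
      rw [Complex.mul_cpow_ofReal_nonneg hy0.le hy0.le]
    have h1 : ((2 * π : ℝ) : ℂ) ^ (1 - s) * ((2 * π : ℝ) : ℂ) ^ (s - 1) = 1 := by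
      rw [← Complex.cpow_add _ _ hπc]
      norm_num
    have h2s : ((y:ℝ):ℂ) ^ (2 * s)
        = ((y:ℝ):ℂ) ^ (s - 1) * ((y:ℝ):ℂ) ^ (s - 1) * ((y:ℝ):ℂ) ^ (2:ℕ) := by
      rw [← Complex.cpow_natCast ((y:ℝ):ℂ) 2, ← Complex.cpow_add _ _ hyc,
        ← Complex.cpow_add _ _ hyc]
      congr 1
      push_cast
      ring
    have hexp : Complex.exp (-(2 * (π:ℂ) * ((y:ℝ):ℂ) ^ (2:ℕ)))
        = ((Real.exp (-(2 * π * y ^ (2:ℕ))) : ℝ) : ℂ) := by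
      push_cast [Complex.ofReal_exp]
      ring_nf
    have hB : ((2 * π : ℝ) : ℂ) ^ (s - 1) ≠ 0 := by
      rw [Complex.cpow_def_of_ne_zero hπc]; exact Complex.exp_ne_zero _
    have hinv : ((2 * π : ℝ) : ℂ) ^ (1 - s) = (((2 * π : ℝ) : ℂ) ^ (s - 1))⁻¹ := by
      rw [← Complex.cpow_neg]; congr 1; ring
    rw [Complex.real_smul, Complex.real_smul, hmul, h2s, hexp, hinv]
    have hy2 : ((y:ℝ):ℂ) ^ 2 ≠ 0 := pow_ne_zero _ hyc
    push_cast
    field_simp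
  -- assemble
  rw [setIntegral_congr_fun measurableSet_Ioi hpt, integral_const_mul, hsub, hGam]
  have hb : ((ENNReal.ofReal 1 ^ 2 * (NNReal.pi : ENNReal)).toReal) = π := by
    simp [Real.coe_toNNReal π Real.pi_pos.le]
  simp only [Complex.finrank_real_complex, measureReal_def, Complex.volume_ball, hb, nsmul_eq_mul,
    Complex.real_smul]
  have hπne : (π : ℂ) ≠ 0 := by exact_mod_cast Real.pi_pos.ne'
  push_cast
  field_simp
end
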